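/- arXiv:1403.6884 — 4 statements merged into one kernel-verified Lean document; each statement's English description precedes it below -/
import Mathlib

section
/- Let S be a finite group and let φ : P → φP, ψ : Q → ψQ be isomorphisms between subgroups of S. Define N_{φ,ψ} := {x ∈ S | xPx⁻¹ ≤ Q and ψ ∘ c_x ∘ φ⁻¹ : φP → ψQ is induced by conjugation by some element of S}, where c_x denotes conjugation by x. Then |N_{S×S}((P,φ),(Q,ψ))| = |N_{φ,ψ}| · |C_S(φP)|, where N_{S×S} denotes the transporter of the twisted diagonal (P,φ) into (Q,ψ) in S × S. -/
/-- For isomorphisms `φ : P → P'` and `ψ : Q → Q'` between subgroups of a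
finite group `S`, with `N_{φ,ψ} = {x ∈ S | xPx⁻¹ ≤ Q and ψ∘c_x∘φ⁻¹ is induced by
conjugation by some element of S}`, one has
`|N_{S×S}((P,φ),(Q,ψ))| = |N_{φ,ψ}| · |C_S(φP)|`. -/
theorem stmt5 (S : Type) [Group S] [Fintype S]
    (P P' Q Q' : Subgroup S) (e : ↥P ≃* ↥P') (f : ↥Q ≃* ↥Q') :
    Nat.card {x : S × S |
        ∀ d ∈ ((P'.subtype.comp e.toMonoidHom).prod P.subtype).range,
          x * d * x⁻¹ ∈ ((Q'.subtype.comp f.toMonoidHom).prod Q.subtype).range}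
      = Nat.card {x : S | (∀ a ∈ P, x * a * x⁻¹ ∈ Q) ∧
          ∃ s : S, ∀ (a : ↥P) (h : x * (a : S) * x⁻¹ ∈ Q),
            ((f ⟨x * (a : S) * x⁻¹, h⟩ : ↥Q') : S) = s * ((e a : ↥P') : S) * s⁻¹}
        * Nat.card (Subgroup.centralizer (P' : Set S)) := by
  classical
  set T : Set (S × S) := {x : S × S |
        ∀ d ∈ ((P'.subtype.comp e.toMonoidHom).prod P.subtype).range,
          x * d * x⁻¹ ∈ ((Q'.subtype.comp f.toMonoidHom).prod Q.subtype).range} with hTdef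
  set N : Set S := {x : S | (∀ a ∈ P, x * a * x⁻¹ ∈ Q) ∧
          ∃ s : S, ∀ (a : ↥P) (h : x * (a : S) * x⁻¹ ∈ Q),
            ((f ⟨x * (a : S) * x⁻¹, h⟩ : ↥Q') : S) = s * ((e a : ↥P') : S) * s⁻¹} with hNdef
  set C := Subgroup.centralizer (P' : Set S) with hCdef
  have hT : ∀ y x : S, (y, x) ∈ T ↔ ∀ p : ↥P, ∃ hq : x * (p : S) * x⁻¹ ∈ Q,
      y * ((e p : ↥P') : S) * y⁻¹ = ((f ⟨x * (p : S) * x⁻¹, hq⟩ : ↥Q') : S) := by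
    intro y x
    constructor
    · intro h p
      obtain ⟨q, hq⟩ := h (((e p : ↥P') : S), (p : S)) ⟨p, rfl⟩
      have h2 : (q : S) = x * (p : S) * x⁻¹ := congrArg Prod.snd hq
      refine ⟨h2 ▸ q.2, ?_⟩
      have h1 : ((f q : ↥Q') : S) = y * ((e p : ↥P') : S) * y⁻¹ := congrArg Prod.fst hq
      have h3 : q = ⟨x * (p : S) * x⁻¹, h2 ▸ q.2⟩ := Subtype.ext h2
      rw [← h1]
      exact congrArg (fun r => ((f r : ↥Q') : S)) h3
    · intro h d hd
      obtain ⟨p, rfl⟩ := hd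
      obtain ⟨hq, heq⟩ := h p
      exact ⟨⟨x * (p : S) * x⁻¹, hq⟩, Prod.ext heq.symm rfl⟩
  have memN : ∀ y x : S, (y, x) ∈ T → x ∈ N := by
    intro y x h
    rw [hT] at h
    exact ⟨fun a ha => (h ⟨a, ha⟩).choose, y, fun a ha => ((h a).choose_spec).symm⟩
  have memC : ∀ (y x : S) (h : (y, x) ∈ T),
      (memN y x h).2.choose⁻¹ * y ∈ C := by
    intro y x h
    rw [hCdef, Subgroup.mem_centralizer_iff]
    intro g hg
    set s₀ := (memN y x h).2.choose with hs₀
    set a : ↥P := e.symm ⟨g, hg⟩ with ha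
    have hea : ((e a : ↥P') : S) = g := by rw [ha, e.apply_symm_apply]
    have hq : x * (a : S) * x⁻¹ ∈ Q := (memN y x h).1 a a.2
    obtain ⟨hq', heq⟩ := (hT y x).1 h a
    have h2 := (memN y x h).2.choose_spec a hq'
    have key : y * g * y⁻¹ = s₀ * g * s₀⁻¹ := by
      rw [← hea, heq, h2]
    calc g * (s₀⁻¹ * y) = s₀⁻¹ * (s₀ * g * s₀⁻¹) * y := by group
      _ = s₀⁻¹ * (y * g * y⁻¹) * y := by rw [key]
      _ = (s₀⁻¹ * y) * g := by group
  have memT : ∀ (x : S) (hx : x ∈ N) (c : S) (hc : c ∈ C),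
      (hx.2.choose * c, x) ∈ T := by
    intro x hx c hc
    rw [hT]
    intro p
    refine ⟨hx.1 p p.2, ?_⟩
    set s₀ := hx.2.choose with hs₀
    have h2 := hx.2.choose_spec p (hx.1 p p.2)
    rw [h2]
    have hcomm : ((e p : ↥P') : S) * c = c * ((e p : ↥P') : S) :=
      (Subgroup.mem_centralizer_iff.mp hc) ((e p : ↥P') : S) (e p).2
    have h3 : c * ((e p : ↥P') : S) * c⁻¹ = ((e p : ↥P') : S) := by
      rw [← hcomm, mul_inv_cancel_right]
    calc (s₀ * c) * ((e p : ↥P') : S) * (s₀ * c)⁻¹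
        = s₀ * (c * ((e p : ↥P') : S) * c⁻¹) * s₀⁻¹ := by group
      _ = s₀ * ((e p : ↥P') : S) * s₀⁻¹ := by rw [h3]
  rw [← Nat.card_prod]
  refine Nat.card_congr ⟨
    fun z => (⟨z.1.2, memN z.1.1 z.1.2 z.2⟩,
      ⟨(memN z.1.1 z.1.2 z.2).2.choose⁻¹ * z.1.1, memC z.1.1 z.1.2 z.2⟩),
    fun w => ⟨(w.1.2.2.choose * w.2.1, w.1.1), memT w.1.1 w.1.2 w.2.1 w.2.2⟩,
    ?_, ?_⟩
  · intro z
    exact Subtype.ext (Prod.ext (mul_inv_cancel_left _ _) rfl)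
  · intro w
    exact Prod.ext (Subtype.ext rfl) (Subtype.ext (inv_mul_cancel_left _ _))
end

section
/- Let S be a finite p-group and F a saturated fusion system on S. If P ≤ S and ι_P : P → S is the inclusion, then the twisted diagonal (P, ι_P) ≤ S × S is fully normalized in the product fusion system F × F if and only if P is fully F-normalized; moreover |N_{S×S}((P,ι_P))| = |N_S(P)| · |C_S(P)|. -/
/-- A fusion system on a group `S`, encoded via partial maps: `Mor P f` asserts that the
restriction of `f : S → S` to the subgroup `P ≤ S` is a morphism of the fusion system,
i.e. an injective group homomorphism from `P` into `S`. -/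
structure FusionSystem (S : Type) [Group S] where
  /-- `Mor P f`: the restriction of `f` to `P` is a morphism `P → S` of the fusion system. -/
  Mor : Subgroup S → (S → S) → Prop
  mul_on : ∀ {P : Subgroup S} {f : S → S}, Mor P f → ∀ x ∈ P, ∀ y ∈ P, f (x * y) = f x * f y
  inj_on : ∀ {P : Subgroup S} {f : S → S}, Mor P f → Set.InjOn f (P : Set S)
  /-- Every homomorphism induced by conjugation in `S` is a morphism. -/
  conj_mem : ∀ (P : Subgroup S) (s : S), Mor P fun x => s * x * s⁻¹
  /-- Morphisms are closed under composition. -/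
  comp_mem : ∀ {P Q : Subgroup S} {f g : S → S}, Mor P f → Mor Q g →
      (∀ x ∈ P, f x ∈ Q) → Mor P (g ∘ f)
  /-- The inverse of the isomorphism onto the image is again a morphism. -/
  inv_mem : ∀ {P : Subgroup S} {f : S → S} (Q : Subgroup S), Mor P f →
      (Q : Set S) = f '' (P : Set S) → ∃ g : S → S, Mor Q g ∧ ∀ x ∈ P, g (f x) = x
  /-- Morphisms restrict to subgroups. -/
  restrict_mem : ∀ {P : Subgroup S} {f : S → S} (Q : Subgroup S), Q ≤ P → Mor P f → Mor Q f

namespace FusionSystem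

variable {S : Type} [Group S] (F : FusionSystem S)

/-- Two subgroups are `F`-conjugate if some morphism of `F` maps one onto the other. -/
def IsConj (P Q : Subgroup S) : Prop :=
  ∃ f : S → S, F.Mor P f ∧ f '' (P : Set S) = (Q : Set S)

/-- `P` is fully `F`-normalized: its normalizer has maximal order in its `F`-class. -/
def FullyNormalized (P : Subgroup S) : Prop :=
  ∀ Q : Subgroup S, F.IsConj P Q → Nat.card (Subgroup.normalizer (Q : Set S)) ≤ Nat.card (Subgroup.normalizer (P : Set S))

/-- `P` is fully `F`-centralized: its centralizer has maximal order in its `F`-class. -/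
def FullyCentralized (P : Subgroup S) : Prop :=
  ∀ Q : Subgroup S, F.IsConj P Q →
    Nat.card (Subgroup.centralizer (Q : Set S)) ≤ Nat.card (Subgroup.centralizer (P : Set S))

/-- `P` is `F`-centric: every `F`-conjugate of `P` contains its own `S`-centralizer. -/
def Centric (P : Subgroup S) : Prop :=
  ∀ Q : Subgroup S, F.IsConj P Q → (Subgroup.centralizer (Q : Set S) : Set S) ⊆ (Q : Set S)

/-- Saturation of a fusion system at the prime `p`: (I) fully normalized subgroups are fully
centralized and their `S`-automorphisms have index prime to `p` among their
`F`-automorphisms (the Sylow axiom); (II) the extension axiom: a morphism with fully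
centralized image extends to its extender `N_φ`. -/
def Saturated (p : ℕ) : Prop :=
  (∀ P : Subgroup S, F.FullyNormalized P →
    F.FullyCentralized P ∧
      ¬ p ∣ (Set.ncard {g : ↥P → S | ∃ f : S → S, F.Mor P f ∧
              f '' (P : Set S) = (P : Set S) ∧ ∀ x : ↥P, g x = f (x : S)} /
        Set.ncard {g : ↥P → S | ∃ s ∈ Subgroup.normalizer (P : Set S), ∀ x : ↥P, g x = s * (x : S) * s⁻¹})) ∧
  (∀ (P : Subgroup S) (f : S → S), F.Mor P f →
    (∀ Q : Subgroup S, (Q : Set S) = f '' (P : Set S) → F.FullyCentralized Q) →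
    ∃ (R : Subgroup S) (g : S → S), F.Mor R g ∧ P ≤ R ∧ (∀ x ∈ P, g x = f x) ∧
      (R : Set S) = {x : S | x ∈ Subgroup.normalizer (P : Set S) ∧
        ∃ y : S, ∀ q ∈ P, f (x * q * x⁻¹) = y * f q * y⁻¹})

/-- A morphism of `F` defined on `P` is nonextendable if it admits no extension to a strictly
larger subgroup. -/
def Nonextendable (P : Subgroup S) (f : S → S) : Prop :=
  F.Mor P f ∧ ∀ (R : Subgroup S) (g : S → S), P ≤ R → F.Mor R g →
    (∀ x ∈ P, g x = f x) → R = P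

end FusionSystem


section Aux

variable {S : Type} [Group S]

/-- Characterization of the normalizer of a diagonal subgroup. -/
lemma mem_normalizer_diag {Q : Subgroup S} {D : Subgroup (S × S)}
    (hD : (D : Set (S × S)) = {z : S × S | z.1 = z.2 ∧ z.2 ∈ Q}) (z : S × S) :
    z ∈ (Subgroup.normalizer (D : Set (S × S))) ↔ z.1 ∈ (Subgroup.normalizer (Q : Set (S))) ∧ z.1⁻¹ * z.2 ∈ Subgroup.centralizer (Q : Set S) := by
  have hmem : ∀ n : S × S, n ∈ D ↔ n.1 = n.2 ∧ n.2 ∈ Q := by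
    intro n; rw [← SetLike.mem_coe, hD]; exact Iff.rfl
  obtain ⟨x, y⟩ := z
  simp only [Subgroup.mem_normalizer_iff]
  constructor
  · intro hz
    have key : ∀ a ∈ Q, x * a * x⁻¹ = y * a * y⁻¹ ∧ y * a * y⁻¹ ∈ Q := by
      intro a ha
      have h := (hz (a, a)).mp ((hmem _).mpr ⟨rfl, ha⟩)
      exact (hmem _).mp h
    constructor
    · intro a
      constructor
      · intro ha
        obtain ⟨he, hm⟩ := key a ha
        rw [he]; exact hm
      · intro ha
        have h := (hz (a, y⁻¹ * (x * a * x⁻¹) * y)).mpr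
        have hpair : ((x, y) * (a, y⁻¹ * (x * a * x⁻¹) * y) * (x, y)⁻¹) ∈ D := by
          apply (hmem _).mpr
          constructor
          · show x * a * x⁻¹ = y * (y⁻¹ * (x * a * x⁻¹) * y) * y⁻¹
            group
          · show y * (y⁻¹ * (x * a * x⁻¹) * y) * y⁻¹ ∈ Q
            have : y * (y⁻¹ * (x * a * x⁻¹) * y) * y⁻¹ = x * a * x⁻¹ := by group
            rw [this]; exact ha
        have hn := (hmem _).mp (h hpair)
        have h1 : a = y⁻¹ * (x * a * x⁻¹) * y := hn.1
        rw [h1]; exact hn.2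
    · rw [Subgroup.mem_centralizer_iff]
      intro a ha
      have he := (key a ha).1
      have h2 : x⁻¹ * (x * a * x⁻¹) * y = x⁻¹ * (y * a * y⁻¹) * y := by rw [he]
      calc a * (x⁻¹ * y) = x⁻¹ * (x * a * x⁻¹) * y := by group
        _ = x⁻¹ * (y * a * y⁻¹) * y := h2
        _ = x⁻¹ * y * a := by group
  · rintro ⟨hx, hc⟩
    intro n
    obtain ⟨a, b⟩ := n
    rw [hmem, hmem]
    have hy : y = x * (x⁻¹ * y) := by group
    set c := x⁻¹ * y with hcdef
    have hxn := hx
    constructor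
    · rintro ⟨h1, h2⟩
      have h1' : a = b := h1
      have h2' : b ∈ Q := h2
      have hcb : c * b * c⁻¹ = b := by
        have h := Subgroup.mem_centralizer_iff.mp hc b h2'
        calc c * b * c⁻¹ = (b * c) * c⁻¹ := by rw [h]
          _ = b := by group
      have heq : y * b * y⁻¹ = x * b * x⁻¹ := by
        calc y * b * y⁻¹ = x * (c * b * c⁻¹) * x⁻¹ := by rw [hy]; group
          _ = x * b * x⁻¹ := by rw [hcb]
      constructor
      · show x * a * x⁻¹ = y * b * y⁻¹
        rw [heq, h1']
      · show y * b * y⁻¹ ∈ Q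
        rw [heq]; exact (hxn b).mp h2'
    · rintro ⟨h1, h2⟩
      have h1' : x * a * x⁻¹ = y * b * y⁻¹ := h1
      have h2' : (y * b * y⁻¹ : S) ∈ Q := h2
      have hyby : y * b * y⁻¹ = x * (c * b * c⁻¹) * x⁻¹ := by rw [hy]; group
      have hm : c * b * c⁻¹ ∈ Q := by
        apply (hxn (c * b * c⁻¹)).mpr
        rw [← hyby]; exact h2'
      have hb : b = c * b * c⁻¹ := by
        have h := Subgroup.mem_centralizer_iff.mp hc (c * b * c⁻¹) hm
        have h' : c * b = c * (c * b * c⁻¹) := by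
          calc c * b = (c * b * c⁻¹) * c := by group
            _ = c * (c * b * c⁻¹) := h
        exact mul_left_cancel h'
      have hbQ : b ∈ Q := hb ▸ hm
      have heq : y * b * y⁻¹ = x * b * x⁻¹ := by rw [hyby, ← hb]
      have hab : a = b := by
        have : x * a * x⁻¹ = x * b * x⁻¹ := by rw [h1', heq]
        have := mul_right_cancel this
        exact mul_left_cancel this
      exact ⟨hab, hbQ⟩

/-- Cardinality of the normalizer of a diagonal subgroup. -/
lemma card_normalizer_diag [Fintype S] {Q : Subgroup S} {D : Subgroup (S × S)}
    (hD : (D : Set (S × S)) = {z : S × S | z.1 = z.2 ∧ z.2 ∈ Q}) :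
    Nat.card (Subgroup.normalizer (D : Set (S × S)))
      = Nat.card (Subgroup.normalizer (Q : Set (S))) * Nat.card (Subgroup.centralizer (Q : Set S)) := by
  have e : ↥(Subgroup.normalizer (D : Set (S × S))) ≃ ↥(Subgroup.normalizer (Q : Set (S))) × ↥(Subgroup.centralizer (Q : Set S)) :=
    { toFun := fun z =>
        (⟨(z : S × S).1, ((mem_normalizer_diag hD _).mp z.2).1⟩,
         ⟨(z : S × S).1⁻¹ * (z : S × S).2, ((mem_normalizer_diag hD _).mp z.2).2⟩)
      invFun := fun w =>
        ⟨((w.1 : S), (w.1 : S) * (w.2 : S)), by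
          apply (mem_normalizer_diag hD _).mpr
          refine ⟨w.1.2, ?_⟩
          show (w.1 : S)⁻¹ * ((w.1 : S) * (w.2 : S)) ∈ _
          rw [inv_mul_cancel_left]
          exact w.2.2⟩
      left_inv := fun z => by
        apply Subtype.ext
        apply Prod.ext
        · rfl
        · show (z : S × S).1 * ((z : S × S).1⁻¹ * (z : S × S).2) = (z : S × S).2
          rw [mul_inv_cancel_left]
      right_inv := fun w => by
        refine Prod.ext (Subtype.ext rfl) (Subtype.ext ?_)
        show (w.1 : S)⁻¹ * ((w.1 : S) * (w.2 : S)) = (w.2 : S)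
        rw [inv_mul_cancel_left] }
  rw [Nat.card_congr e, Nat.card_prod]

end Aux

section Aux2

variable {S : Type} [Group S] (F : FusionSystem S)

lemma FusionSystem.isConj_refl (P : Subgroup S) : F.IsConj P P := by
  refine ⟨fun x => 1 * x * 1⁻¹, F.conj_mem P 1, ?_⟩
  ext z
  simp

lemma FusionSystem.isConj_symm {P Q : Subgroup S} (h : F.IsConj P Q) : F.IsConj Q P := by
  obtain ⟨f, hf, hfP⟩ := h
  obtain ⟨g, hg, hgf⟩ := F.inv_mem Q hf hfP.symm
  refine ⟨g, hg, ?_⟩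
  rw [← hfP, ← Set.image_comp]
  ext z
  constructor
  · rintro ⟨x, hx, rfl⟩
    simpa [hgf x hx] using hx
  · intro hz
    exact ⟨z, hz, by simp [hgf z hz]⟩

lemma FusionSystem.isConj_trans {P Q R : Subgroup S} (h1 : F.IsConj P Q) (h2 : F.IsConj Q R) :
    F.IsConj P R := by
  obtain ⟨f, hf, hfP⟩ := h1
  obtain ⟨g, hg, hgQ⟩ := h2
  refine ⟨g ∘ f, F.comp_mem hf hg ?_, ?_⟩
  · intro x hx
    have : f x ∈ (Q : Set S) := hfP ▸ Set.mem_image_of_mem f hx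
    exact this
  · rw [Set.image_comp, hfP, hgQ]

/-- The image of a subgroup under a fusion-system morphism is a subgroup. -/
lemma FusionSystem.exists_image {P : Subgroup S} {f : S → S} (hf : F.Mor P f) :
    ∃ Q : Subgroup S, (Q : Set S) = f '' (P : Set S) ∧ F.IsConj P Q := by
  have h1 : f 1 = 1 := by
    have h := F.mul_on hf 1 P.one_mem 1 P.one_mem
    rw [mul_one] at h
    have h' : f 1 * 1 = f 1 * f 1 := by rw [mul_one]; exact h
    exact (mul_left_cancel h').symm
  have hinv : ∀ x ∈ P, f x⁻¹ = (f x)⁻¹ := by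
    intro x hx
    have h := F.mul_on hf x hx x⁻¹ (P.inv_mem hx)
    rw [mul_inv_cancel, h1] at h
    exact eq_inv_of_mul_eq_one_right h.symm
  refine ⟨{ carrier := f '' (P : Set S)
            mul_mem' := by
              rintro a b ⟨x, hx, rfl⟩ ⟨y, hy, rfl⟩
              exact ⟨x * y, P.mul_mem hx hy, F.mul_on hf x hx y hy⟩
            one_mem' := ⟨1, P.one_mem, h1⟩
            inv_mem' := by
              rintro a ⟨x, hx, rfl⟩
              exact ⟨x⁻¹, P.inv_mem hx, hinv x hx⟩ }, rfl, f, hf, rfl⟩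

/-- Existence of a fully normalized subgroup in each conjugacy class. -/
lemma FusionSystem.exists_fullyNormalized [Fintype S] (P : Subgroup S) :
    ∃ Q : Subgroup S, F.IsConj P Q ∧ F.FullyNormalized Q ∧
      Nat.card (Subgroup.normalizer (P : Set (S))) ≤ Nat.card (Subgroup.normalizer (Q : Set (S))) := by
  set T : Set ℕ := {n | ∃ Q : Subgroup S, F.IsConj P Q ∧ Nat.card (Subgroup.normalizer (Q : Set (S))) = n} with hT
  have hne : T.Nonempty := ⟨Nat.card (Subgroup.normalizer (P : Set (S))), P, F.isConj_refl P, rfl⟩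
  have hbdd : BddAbove T := by
    refine ⟨Nat.card S, ?_⟩
    rintro n ⟨Q, _, rfl⟩
    exact Nat.card_le_card_of_injective _ (Subgroup.normalizer (Q : Set (S))).subtype_injective
  obtain ⟨Q, hQ, hQn⟩ : sSup T ∈ T := Nat.sSup_mem hne hbdd
  refine ⟨Q, hQ, ?_, ?_⟩
  · intro R hR
    have : Nat.card (Subgroup.normalizer (R : Set (S))) ∈ T := ⟨R, F.isConj_trans hQ hR, rfl⟩
    rw [hQn]
    exact le_csSup hbdd this
  · rw [hQn]
    exact le_csSup hbdd ⟨P, F.isConj_refl P, rfl⟩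

end Aux2

section Aux3

variable {S : Type} [Group S] [Fintype S]

/-- First component of a normalizer element of a twisted diagonal normalizes the image. -/
lemma card_normalizer_twisted {P Q₁ Q₂ : Subgroup S} {f g : S → S}
    (hf : Set.InjOn f (P : Set S))
    (hQ₁ : (Q₁ : Set S) = f '' (P : Set S)) (hQ₂ : (Q₂ : Set S) = g '' (P : Set S))
    (R : Subgroup (S × S))
    (hR : ∀ n : S × S, n ∈ R ↔ ∃ a ∈ P, n = (f a, g a)) :
    Nat.card (Subgroup.normalizer (R : Set (S × S)))
      ≤ Nat.card (Subgroup.normalizer (Q₁ : Set (S))) * Nat.card (Subgroup.centralizer (Q₂ : Set S)) := by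
  -- first projections of normalizer elements normalize Q₁
  have hfst : ∀ z : S × S, z ∈ (Subgroup.normalizer (R : Set (S × S))) → z.1 ∈ (Subgroup.normalizer (Q₁ : Set (S))) := by
    rintro ⟨x, y⟩ hz
    rw [Subgroup.mem_normalizer_iff] at hz ⊢
    intro b
    constructor
    · intro hb
      have : b ∈ f '' (P : Set S) := hQ₁ ▸ hb
      obtain ⟨a, ha, rfl⟩ := this
      have h1 : ((f a, g a) : S × S) ∈ R := (hR _).mpr ⟨a, ha, rfl⟩
      have h2 := (hz (f a, g a)).mp h1
      obtain ⟨a', ha', heq⟩ := (hR _).mp h2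
      have : x * f a * x⁻¹ = f a' := congrArg Prod.fst heq
      rw [this]
      show f a' ∈ (Q₁ : Set S)
      rw [hQ₁]
      exact ⟨a', ha', rfl⟩
    · intro hb
      have : x * b * x⁻¹ ∈ f '' (P : Set S) := hQ₁ ▸ hb
      obtain ⟨a', ha', heq⟩ := this
      have hpair : ((x, y) * (b, y⁻¹ * g a' * y) * (x, y)⁻¹ : S × S) ∈ R := by
        apply (hR _).mpr
        refine ⟨a', ha', ?_⟩
        have e1 : x * b * x⁻¹ = f a' := heq.symm ▸ rfl
        have e2 : y * (y⁻¹ * g a' * y) * y⁻¹ = g a' := by group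
        calc ((x, y) * (b, y⁻¹ * g a' * y) * (x, y)⁻¹ : S × S)
            = (x * b * x⁻¹, y * (y⁻¹ * g a' * y) * y⁻¹) := rfl
          _ = (f a', g a') := by rw [heq, e2]
      have hmem := (hz (b, y⁻¹ * g a' * y)).mpr hpair
      obtain ⟨a'', ha'', heq'⟩ := (hR _).mp hmem
      have : b = f a'' := congrArg Prod.fst heq'
      rw [this]
      show f a'' ∈ (Q₁ : Set S)
      rw [hQ₁]
      exact ⟨a'', ha'', rfl⟩
  -- kernel elements centralize Q₂
  have hker : ∀ y : S, ((1 : S), y) ∈ (Subgroup.normalizer (R : Set (S × S))) → y ∈ Subgroup.centralizer (Q₂ : Set S) := by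
    intro y hz
    rw [Subgroup.mem_normalizer_iff] at hz
    rw [Subgroup.mem_centralizer_iff]
    intro b hb
    have : b ∈ g '' (P : Set S) := hQ₂ ▸ hb
    obtain ⟨a, ha, rfl⟩ := this
    have h1 : ((f a, g a) : S × S) ∈ R := (hR _).mpr ⟨a, ha, rfl⟩
    have h2 := (hz (f a, g a)).mp h1
    obtain ⟨a', ha', heq⟩ := (hR _).mp h2
    have e1 : 1 * f a * 1⁻¹ = f a' := congrArg Prod.fst heq
    have e2 : y * g a * y⁻¹ = g a' := congrArg Prod.snd heq
    have : f a = f a' := by rw [← e1]; group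
    have haa : a = a' := hf ha ha' this
    rw [← haa] at e2
    have h := congrArg (· * y) e2
    rw [inv_mul_cancel_right] at h
    exact h.symm
  -- counting via the first projection homomorphism
  set G := (Subgroup.normalizer (R : Set (S × S)))
  set φ : ↥G →* S := (MonoidHom.fst S S).comp G.subtype with hφ
  have h1 : Nat.card ↥G = Nat.card (↥G ⧸ φ.ker) * Nat.card φ.ker :=
    Subgroup.card_eq_card_quotient_mul_card_subgroup φ.ker
  have h2 : Nat.card (↥G ⧸ φ.ker) = Nat.card φ.range :=
    Nat.card_congr (QuotientGroup.quotientKerEquivRange φ).toEquiv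
  have h3 : φ.range ≤ (Subgroup.normalizer (Q₁ : Set (S))) := by
    rintro _ ⟨z, rfl⟩
    exact hfst _ z.2
  have h4 : Nat.card φ.range ≤ Nat.card (Subgroup.normalizer (Q₁ : Set (S))) := Subgroup.card_le_of_le h3
  have h5 : Nat.card φ.ker ≤ Nat.card (Subgroup.centralizer (Q₂ : Set S)) := by
    have hmap : ∀ k : ↥φ.ker, ((k : ↥G) : S × S).2 ∈ Subgroup.centralizer (Q₂ : Set S) := by
      intro k
      have hk1 : ((k : ↥G) : S × S).1 = 1 := k.2
      have hk : ((k : ↥G) : S × S) = ((1 : S), ((k : ↥G) : S × S).2) := by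
        apply Prod.ext
        · exact hk1
        · rfl
      apply hker
      rw [← hk]
      exact (k : ↥G).2
    have hinj : Function.Injective
        (fun k : ↥φ.ker => (⟨((k : ↥G) : S × S).2, hmap k⟩ :
          ↥(Subgroup.centralizer (Q₂ : Set S)))) := by
      intro k k' h
      have h2' : ((k : ↥G) : S × S).2 = ((k' : ↥G) : S × S).2 := congrArg Subtype.val h
      have e : φ (k : ↥G) = 1 := k.2
      have e' : φ (k' : ↥G) = 1 := k'.2
      have h1' : ((k : ↥G) : S × S).1 = ((k' : ↥G) : S × S).1 := e.trans e'.symm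
      exact Subtype.ext (Subtype.ext (Prod.ext h1' h2'))
    exact Nat.card_le_card_of_injective _ hinj
  calc Nat.card ↥G = Nat.card φ.range * Nat.card φ.ker := by rw [h1, h2]
    _ ≤ Nat.card (Subgroup.normalizer (Q₁ : Set (S))) * Nat.card (Subgroup.centralizer (Q₂ : Set S)) :=
        Nat.mul_le_mul h4 h5

end Aux3

/-- Let `F` be a saturated fusion system on a finite `p`-group `S`, `P ≤ S`,
and `Δ = (P, ι_P) = {(a,a) | a ∈ P} ≤ S × S` the diagonal.  Then `Δ` is fully normalized in
the product fusion system `F × F` (whose conjugation maps are restrictions of pairs of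
`F`-morphisms) iff `P` is fully `F`-normalized; moreover
`|N_{S×S}((P,ι_P))| = |N_S(P)| · |C_S(P)|`. -/
theorem stmt12 (p : ℕ) (hp : p.Prime) (S : Type) [Group S] [Fintype S]
    (hS : IsPGroup p S) (F : FusionSystem S) (hF : F.Saturated p)
    (P : Subgroup S) (Δ : Subgroup (S × S))
    (hΔ : (Δ : Set (S × S)) = {z : S × S | z.1 = z.2 ∧ z.2 ∈ P}) :
    ((∀ R : Subgroup (S × S),
        (∃ (A B : Subgroup S) (f g : S → S), F.Mor A f ∧ F.Mor B g ∧
          (Δ : Set (S × S)) ⊆ (A : Set S) ×ˢ (B : Set S) ∧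
          Prod.map f g '' (Δ : Set (S × S)) = (R : Set (S × S))) →
        Nat.card (Subgroup.normalizer (R : Set (S × S))) ≤ Nat.card (Subgroup.normalizer (Δ : Set (S × S)))) ↔ F.FullyNormalized P) ∧
    Nat.card (Subgroup.normalizer (Δ : Set (S × S)))
      = Nat.card (Subgroup.normalizer (P : Set S)) * Nat.card (Subgroup.centralizer (P : Set S)) := by
  have hcardΔ : Nat.card (Subgroup.normalizer (Δ : Set (S × S)))
      = Nat.card (Subgroup.normalizer (P : Set (S))) * Nat.card (Subgroup.centralizer (P : Set S)) :=
    card_normalizer_diag hΔ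
  refine ⟨⟨?_, ?_⟩, hcardΔ⟩
  · -- fully normalized diagonal implies fully normalized
    intro hfn
    obtain ⟨Q', hconj, hQfn, hle⟩ := F.exists_fullyNormalized P
    obtain ⟨f, hfm, hfim⟩ := hconj
    have hconj : F.IsConj P Q' := ⟨f, hfm, hfim⟩
    set D : Subgroup (S × S) :=
      { carrier := {z : S × S | z.1 = z.2 ∧ z.2 ∈ Q'}
        mul_mem' := by
          rintro ⟨a, b⟩ ⟨c, d⟩ ⟨h1, h2⟩ ⟨h3, h4⟩
          exact ⟨by simp_all, Q'.mul_mem h2 h4⟩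
        one_mem' := ⟨rfl, Q'.one_mem⟩
        inv_mem' := by
          rintro ⟨a, b⟩ ⟨h1, h2⟩
          exact ⟨by simp_all, Q'.inv_mem h2⟩ } with hDdef
    have hD : (D : Set (S × S)) = {z : S × S | z.1 = z.2 ∧ z.2 ∈ Q'} := rfl
    have himg : Prod.map f f '' (Δ : Set (S × S)) = (D : Set (S × S)) := by
      rw [hΔ, hD]
      ext z
      constructor
      · rintro ⟨⟨a, b⟩, ⟨h1, h2⟩, rfl⟩
        have h1' : a = b := h1
        subst h1'
        refine ⟨rfl, ?_⟩
        show f a ∈ (Q' : Set S)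
        rw [← hfim]
        exact ⟨a, h2, rfl⟩
      · rintro ⟨h1, h2⟩
        have : z.2 ∈ f '' (P : Set S) := by rw [hfim]; exact h2
        obtain ⟨a, ha, hfa⟩ := this
        refine ⟨(a, a), ⟨rfl, ha⟩, ?_⟩
        show (f a, f a) = z
        apply Prod.ext
        · show f a = z.1
          rw [hfa, h1]
        · exact hfa
    have hsub : (Δ : Set (S × S)) ⊆ (P : Set S) ×ˢ (P : Set S) := by
      rw [hΔ]
      rintro ⟨a, b⟩ ⟨h1, h2⟩
      have h1' : a = b := h1
      subst h1'
      exact ⟨h2, h2⟩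
    have hDle := hfn D ⟨P, P, f, f, hfm, hfm, hsub, himg⟩
    have hcardD := card_normalizer_diag hD
    have hQfc := (hF.1 Q' hQfn).1
    have hCP : Nat.card (Subgroup.centralizer (P : Set S))
        ≤ Nat.card (Subgroup.centralizer (Q' : Set S)) :=
      hQfc P (F.isConj_symm hconj)
    have hpos : 0 < Nat.card (Subgroup.centralizer (P : Set S)) := Nat.card_pos
    have key : Nat.card (Subgroup.normalizer (Q' : Set (S))) ≤ Nat.card (Subgroup.normalizer (P : Set (S))) := by
      rw [hcardD, hcardΔ] at hDle
      have h2 : Nat.card (Subgroup.normalizer (Q' : Set (S))) * Nat.card (Subgroup.centralizer (P : Set S))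
          ≤ Nat.card (Subgroup.normalizer (P : Set (S))) * Nat.card (Subgroup.centralizer (P : Set S)) :=
        le_trans (Nat.mul_le_mul_left _ hCP) hDle
      exact Nat.le_of_mul_le_mul_right h2 hpos
    intro Q hQ
    exact le_trans (hQfn Q (F.isConj_trans (F.isConj_symm hconj) hQ)) key
  · -- fully normalized implies fully normalized diagonal
    rintro hPfn R ⟨A, B, f, g, hfA, hgB, hsub, himg⟩
    have hPA : P ≤ A := by
      intro a ha
      have hmem : ((a, a) : S × S) ∈ (Δ : Set (S × S)) := by rw [hΔ]; exact ⟨rfl, ha⟩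
      exact (hsub hmem).1
    have hPB : P ≤ B := by
      intro a ha
      have hmem : ((a, a) : S × S) ∈ (Δ : Set (S × S)) := by rw [hΔ]; exact ⟨rfl, ha⟩
      exact (hsub hmem).2
    have hf := F.restrict_mem P hPA hfA
    have hg := F.restrict_mem P hPB hgB
    obtain ⟨Q₁, hQ₁, hconj₁⟩ := F.exists_image hf
    obtain ⟨Q₂, hQ₂, hconj₂⟩ := F.exists_image hg
    have hR : ∀ n : S × S, n ∈ R ↔ ∃ a ∈ P, n = (f a, g a) := by
      intro n
      rw [← SetLike.mem_coe, ← himg, hΔ]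
      constructor
      · rintro ⟨⟨a, b⟩, ⟨h1, h2⟩, rfl⟩
        have h1' : a = b := h1
        subst h1'
        exact ⟨a, h2, rfl⟩
      · rintro ⟨a, ha, rfl⟩
        exact ⟨(a, a), ⟨rfl, ha⟩, rfl⟩
    have hle := card_normalizer_twisted (F.inj_on hf) hQ₁ hQ₂ R hR
    have h1 : Nat.card (Subgroup.normalizer (Q₁ : Set (S))) ≤ Nat.card (Subgroup.normalizer (P : Set (S))) := hPfn Q₁ hconj₁
    have h2 : Nat.card (Subgroup.centralizer (Q₂ : Set S))
        ≤ Nat.card (Subgroup.centralizer (P : Set S)) :=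
      (hF.1 P hPfn).1 Q₂ hconj₂
    rw [hcardΔ]
    exact le_trans hle (Nat.mul_le_mul h1 h2)
end

section
/- Let S be a finite p-group, F a saturated fusion system on S, and suppose P ≤ Q ≤ S with P F-centric. If ψ₁, ψ₂ : Q → S are two F-morphisms with ψ₁|_P = ψ₂|_P, then there exists z ∈ Z(P) such that ψ₂ = ψ₁ ∘ c_z on Q, where c_z is conjugation by z. -/
namespace FusionSystem

variable {S : Type} [Group S] {F : FusionSystem S}

lemma mor_one {P : Subgroup S} {f : S → S} (h : F.Mor P f) : f 1 = 1 := by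
  have := F.mul_on h 1 P.one_mem 1 P.one_mem
  rw [one_mul] at this
  exact left_eq_mul.mp this

lemma mor_inv {P : Subgroup S} {f : S → S} (h : F.Mor P f) {x : S} (hx : x ∈ P) :
    f x⁻¹ = (f x)⁻¹ := by
  have := F.mul_on h x hx x⁻¹ (P.inv_mem hx)
  rw [mul_inv_cancel, mor_one h] at this
  exact eq_inv_of_mul_eq_one_right this.symm

/-- The image of a subgroup `R ≤ P` under a morphism on `P`, as a subgroup. -/
def morRange {P : Subgroup S} {f : S → S} (h : F.Mor P f) (R : Subgroup S) (hR : R ≤ P) :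
    Subgroup S where
  carrier := f '' (R : Set S)
  one_mem' := ⟨1, R.one_mem, mor_one h⟩
  mul_mem' := by
    rintro _ _ ⟨a, ha, rfl⟩ ⟨b, hb, rfl⟩
    exact ⟨a * b, R.mul_mem ha hb, F.mul_on h a (hR ha) b (hR hb)⟩
  inv_mem' := by
    rintro _ ⟨a, ha, rfl⟩
    exact ⟨a⁻¹, R.inv_mem ha, mor_inv h (hR ha)⟩

@[simp] lemma coe_morRange {P : Subgroup S} {f : S → S} (h : F.Mor P f) (R : Subgroup S)
    (hR : R ≤ P) : ((morRange h R hR : Subgroup S) : Set S) = f '' (R : Set S) := rfl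

lemma mem_morRange {P : Subgroup S} {f : S → S} {h : F.Mor P f} {R : Subgroup S} {hR : R ≤ P}
    {y : S} : y ∈ morRange h R hR ↔ ∃ x ∈ R, f x = y := Iff.rfl

lemma isConj_refl_s15 (P : Subgroup S) : F.IsConj P P := by
  refine ⟨fun x => 1 * x * 1⁻¹, F.conj_mem P 1, ?_⟩
  have : (fun x => 1 * x * 1⁻¹) = fun x : S => x := by funext x; simp
  rw [this]; exact Set.image_id _

lemma isConj_trans_s15 {P Q R : Subgroup S} (h1 : F.IsConj P Q) (h2 : F.IsConj Q R) :
    F.IsConj P R := by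
  obtain ⟨f, hf, hfim⟩ := h1
  obtain ⟨g, hg, hgim⟩ := h2
  refine ⟨g ∘ f, F.comp_mem hf hg (fun x hx => ?_), ?_⟩
  · have : f x ∈ f '' (P : Set S) := ⟨x, hx, rfl⟩
    rwa [hfim] at this
  · rw [Set.image_comp, hfim, hgim]

lemma isConj_symm_s15 {P Q : Subgroup S} (h : F.IsConj P Q) : F.IsConj Q P := by
  obtain ⟨f, hf, hfim⟩ := h
  obtain ⟨g, hg, hgf⟩ := F.inv_mem Q hf hfim.symm
  refine ⟨g, hg, ?_⟩
  apply Set.eq_of_subset_of_subset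
  · rintro _ ⟨y, hy, rfl⟩
    rw [← hfim] at hy
    obtain ⟨x, hx, rfl⟩ := hy
    rw [hgf x hx]; exact hx
  · intro x hx
    refine ⟨f x, ?_, hgf x hx⟩
    rw [← hfim]; exact ⟨x, hx, rfl⟩

/-- A subgroup containing a centric subgroup is centric. -/
lemma centric_of_le {T N : Subgroup S} (hT : F.Centric T) (hTN : T ≤ N) : F.Centric N := by
  intro N₁ hN₁
  obtain ⟨f, hf, hfim⟩ := hN₁
  have hT₁ : F.IsConj T (morRange hf T hTN) := ⟨f, F.restrict_mem T hTN hf, rfl⟩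
  intro x hx
  have hsub : ((morRange hf T hTN : Subgroup S) : Set S) ⊆ (N₁ : Set S) := by
    rw [coe_morRange, ← hfim]; exact Set.image_mono hTN
  have : x ∈ Subgroup.centralizer ((morRange hf T hTN : Subgroup S) : Set S) := by
    rw [Subgroup.mem_centralizer_iff]
    intro h hh
    have := (Subgroup.mem_centralizer_iff.mp hx) h (hsub hh)
    exact this
  exact hsub (hT _ hT₁ this)

/-- A centric subgroup is conjugate-closed centric. -/
lemma centric_of_isConj {T T' : Subgroup S} (hT : F.Centric T) (h : F.IsConj T T') :
    F.Centric T' := fun Q hQ => hT Q (isConj_trans_s15 h hQ)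


end FusionSystem

namespace FusionSystem

set_option linter.unusedSectionVars false

variable {S : Type} [Group S] (F : FusionSystem S)

/-- The group of `F`-automorphisms of `P`, realized as a subgroup of permutations of `P`. -/
def permGroup (P : Subgroup S) : Subgroup (Equiv.Perm ↥P) where
  carrier := {σ | ∃ f : S → S, F.Mor P f ∧ ∀ x : ↥P, ((σ x : S)) = f (x : S)}
  one_mem' := ⟨fun x => 1 * x * 1⁻¹, F.conj_mem P 1, fun x => by simp⟩
  mul_mem' := by
    rintro σ₁ σ₂ ⟨f₁, hf₁, he₁⟩ ⟨f₂, hf₂, he₂⟩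
    refine ⟨f₁ ∘ f₂, F.comp_mem hf₂ hf₁ (fun x hx => ?_), fun x => ?_⟩
    · have h := he₂ ⟨x, hx⟩
      rw [← h]
      exact (σ₂ ⟨x, hx⟩).2
    · have h2 := he₂ x
      calc ((σ₁ (σ₂ x) : S)) = f₁ ((σ₂ x : S)) := he₁ (σ₂ x)
        _ = f₁ (f₂ (x : S)) := by rw [h2]
  inv_mem' := by
    rintro σ ⟨f, hf, he⟩
    have himg : ((P : Set S)) = f '' (P : Set S) := by
      apply Set.eq_of_subset_of_subset
      · intro y hy
        refine ⟨((σ⁻¹ ⟨y, hy⟩ : ↥P) : S), (σ⁻¹ ⟨y, hy⟩).2, ?_⟩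
        rw [← he (σ⁻¹ ⟨y, hy⟩)]
        simp
      · rintro _ ⟨x, hx, rfl⟩
        rw [← he ⟨x, hx⟩]
        exact (σ ⟨x, hx⟩).2
    obtain ⟨g, hg, hgf⟩ := F.inv_mem P hf himg
    refine ⟨g, hg, fun x => ?_⟩
    have h1 : g (f ((σ⁻¹ x : ↥P) : S)) = ((σ⁻¹ x : ↥P) : S) := hgf _ (σ⁻¹ x).2
    rw [← he (σ⁻¹ x)] at h1
    simp only [Equiv.Perm.inv_def, Equiv.apply_symm_apply] at h1
    exact h1.symm

lemma mem_permGroup {P : Subgroup S} {σ : Equiv.Perm ↥P} :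
    σ ∈ F.permGroup P ↔ ∃ f : S → S, F.Mor P f ∧ ∀ x : ↥P, ((σ x : S)) = f (x : S) :=
  Iff.rfl

variable (S) in
/-- Conjugation homomorphism from the normalizer of `P` to permutations of `P`. -/
def conjHom (P : Subgroup S) : ↥(Subgroup.normalizer (P : Set S)) →* Equiv.Perm ↥P where
  toFun s :=
    { toFun := fun x => ⟨(s : S) * x * (s : S)⁻¹,
        (Subgroup.mem_normalizer_iff.mp s.2 (x : S)).mp x.2⟩
      invFun := fun x => ⟨(s : S)⁻¹ * x * (s : S),
        by
          have := (Subgroup.mem_normalizer_iff.mp ((Subgroup.normalizer (P : Set S)).inv_mem s.2) (x : S)).mp x.2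
          simpa using this⟩
      left_inv := fun x => Subtype.ext (by group)
      right_inv := fun x => Subtype.ext (by group) }
  map_one' := Equiv.ext fun x => Subtype.ext (by simp)
  map_mul' s t := Equiv.ext fun x => Subtype.ext (by simp [mul_assoc])

lemma conjHom_apply {P : Subgroup S} (s : ↥(Subgroup.normalizer (P : Set S))) (x : ↥P) :
    ((conjHom S P s x : ↥P) : S) = (s : S) * x * (s : S)⁻¹ := rfl

lemma conjHom_range_le (P : Subgroup S) : (conjHom S P).range ≤ F.permGroup P := by
  rintro _ ⟨s, rfl⟩
  exact ⟨fun x => (s : S) * x * (s : S)⁻¹, F.conj_mem P (s : S), fun x => rfl⟩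

variable [Fintype S]

lemma card_permGroup (P : Subgroup S) :
    Set.ncard {g : ↥P → S | ∃ f : S → S, F.Mor P f ∧
        f '' (P : Set S) = (P : Set S) ∧ ∀ x : ↥P, g x = f (x : S)} =
      Nat.card (F.permGroup P) := by
  classical
  rw [← Nat.card_coe_set_eq]
  symm
  have hmem1 : ∀ σ : ↥(F.permGroup P), (fun x : ↥P => ((σ : Equiv.Perm ↥P) x : S)) ∈
      {g : ↥P → S | ∃ f : S → S, F.Mor P f ∧
        f '' (P : Set S) = (P : Set S) ∧ ∀ x : ↥P, g x = f (x : S)} := by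
    intro σ
    obtain ⟨f, hf, he⟩ := σ.2
    refine ⟨f, hf, ?_, fun x => he x⟩
    apply Set.eq_of_subset_of_subset
    · rintro _ ⟨x, hx, rfl⟩
      rw [← he ⟨x, hx⟩]
      exact ((σ : Equiv.Perm ↥P) ⟨x, hx⟩).2
    · intro y hy
      refine ⟨(((σ : Equiv.Perm ↥P)⁻¹ ⟨y, hy⟩ : ↥P) : S), ((σ : Equiv.Perm ↥P)⁻¹ ⟨y, hy⟩).2, ?_⟩
      rw [← he ((σ : Equiv.Perm ↥P)⁻¹ ⟨y, hy⟩)]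
      simp
  apply Nat.card_eq_of_bijective
    (fun σ : ↥(F.permGroup P) => (⟨fun x => ((σ : Equiv.Perm ↥P) x : S), hmem1 σ⟩ : _))
  constructor
  · intro σ₁ σ₂ h
    have h' := congrArg Subtype.val h
    apply Subtype.ext
    apply Equiv.ext
    intro x
    apply Subtype.ext
    exact congrFun h' x
  · rintro ⟨g, hg⟩
    obtain ⟨f, hf, hfim, hgf⟩ := hg
    have hmem : ∀ x : ↥P, f (x : S) ∈ P := by
      intro x
      have : f (x : S) ∈ f '' (P : Set S) := ⟨x, x.2, rfl⟩
      rw [hfim] at this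
      exact this
    have hinj : Function.Injective (fun x : ↥P => (⟨f x, hmem x⟩ : ↥P)) := by
      intro a b hab
      exact Subtype.ext (F.inj_on hf a.2 b.2 (congrArg Subtype.val hab))
    have hbij := Finite.injective_iff_bijective.mp hinj
    refine ⟨⟨Equiv.ofBijective _ hbij, ⟨f, hf, fun x => rfl⟩⟩, ?_⟩
    apply Subtype.ext
    funext x
    exact (hgf x).symm

lemma card_conjHom_range (P : Subgroup S) :
    Set.ncard {g : ↥P → S | ∃ s ∈ (Subgroup.normalizer (P : Set S)), ∀ x : ↥P, g x = s * (x : S) * s⁻¹} =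
      Nat.card (conjHom S P).range := by
  classical
  rw [← Nat.card_coe_set_eq]
  symm
  have hmem1 : ∀ σ : ↥(conjHom S P).range, (fun x : ↥P => ((σ : Equiv.Perm ↥P) x : S)) ∈
      {g : ↥P → S | ∃ s ∈ (Subgroup.normalizer (P : Set S)), ∀ x : ↥P, g x = s * (x : S) * s⁻¹} := by
    intro σ
    obtain ⟨s, hs⟩ := σ.2
    refine ⟨(s : S), s.2, fun x => ?_⟩
    rw [← hs]
    exact (conjHom_apply s x).symm
  apply Nat.card_eq_of_bijective
    (fun σ : ↥(conjHom S P).range => (⟨fun x => ((σ : Equiv.Perm ↥P) x : S), hmem1 σ⟩ : _))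
  constructor
  · intro σ₁ σ₂ h
    have h' := congrArg Subtype.val h
    apply Subtype.ext
    apply Equiv.ext
    intro x
    apply Subtype.ext
    exact congrFun h' x
  · rintro ⟨g, hg⟩
    obtain ⟨s, hs, hgs⟩ := hg
    refine ⟨⟨conjHom S P ⟨s, hs⟩, ⟨⟨s, hs⟩, rfl⟩⟩, ?_⟩
    apply Subtype.ext
    funext x
    show ((conjHom S P ⟨s, hs⟩ x : ↥P) : S) = g x
    rw [hgs x]
    exact conjHom_apply ⟨s, hs⟩ x


set_option linter.unusedSectionVars false

open Pointwise

lemma lt_normalizer_inf {p : ℕ} (hp : p.Prime) [Fintype S] (hS : IsPGroup p S)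
    {T Q' : Subgroup S} (h : T < Q') : T < (Subgroup.normalizer (T : Set S)) ⊓ Q' := by
  haveI : Fact p.Prime := ⟨hp⟩
  have hQ'p : IsPGroup p ↥Q' := hS.to_subgroup Q'
  haveI := hQ'p.isNilpotent
  have hnc : NormalizerCondition ↥Q' := normalizerCondition_of_isNilpotent
  set H : Subgroup ↥Q' := T.subgroupOf Q' with hH
  have hHtop : H < ⊤ := by
    rcases SetLike.exists_of_lt h with ⟨a, haQ, haT⟩
    refine lt_of_le_of_ne le_top (fun htop => haT ?_)
    have : (⟨a, haQ⟩ : ↥Q') ∈ H := htop ▸ Subgroup.mem_top _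
    exact this
  obtain ⟨x, hxn, hxH⟩ := SetLike.exists_of_lt (hnc H hHtop)
  have hTle : T ≤ Q' := h.le
  refine lt_of_le_of_ne (le_inf Subgroup.le_normalizer hTle) (fun heq => ?_)
  have hxT : (x : S) ∉ T := fun hc => hxH (by simpa [hH, Subgroup.mem_subgroupOf] using hc)
  apply hxT
  have hxnorm : (x : S) ∈ (Subgroup.normalizer (T : Set S)) := by
    rw [Subgroup.mem_normalizer_iff]
    intro t
    constructor
    · intro ht
      have htQ : t ∈ Q' := hTle ht
      have : (⟨t, htQ⟩ : ↥Q') ∈ H := by simpa [hH, Subgroup.mem_subgroupOf]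
      have := (Subgroup.mem_normalizer_iff.mp hxn (⟨t, htQ⟩ : ↥Q')).mp this
      simpa [hH, Subgroup.mem_subgroupOf] using this
    · intro ht
      have htQ2 : (x : S) * t * (x : S)⁻¹ ∈ Q' := hTle ht
      have htQ : t ∈ Q' := by
        have : t = (x : S)⁻¹ * ((x : S) * t * (x : S)⁻¹) * (x : S) := by group
        rw [this]
        exact Q'.mul_mem (Q'.mul_mem (Q'.inv_mem x.2) htQ2) x.2
      have hmem : (⟨t, htQ⟩ : ↥Q') ∈ H := by
        apply (Subgroup.mem_normalizer_iff.mp hxn (⟨t, htQ⟩ : ↥Q')).mpr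
        simpa [hH, Subgroup.mem_subgroupOf]
      simpa [hH, Subgroup.mem_subgroupOf] using hmem
  have : (x : S) ∈ (Subgroup.normalizer (T : Set S)) ⊓ Q' := ⟨hxnorm, x.2⟩
  rw [← heq] at this
  exact this


variable {F}

/-- Core lemma: a morphism on `N ≤ N_S(T)` restricting to the identity on a centric `T`
is conjugation by an element of `Z(T)`. -/
lemma crux {p : ℕ} (hp : p.Prime) [Fintype S] (hS : IsPGroup p S)
    (hF : F.Saturated p) {T N : Subgroup S} (hTN : T ≤ N) (hNnorm : N ≤ (Subgroup.normalizer (T : Set S)))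
    (hT : F.Centric T) {α : S → S} (hα : F.Mor N α) (hid : ∀ t ∈ T, α t = t) :
    ∃ z ∈ T, (∀ t ∈ T, z * t = t * z) ∧ ∀ x ∈ N, α x = z * x * z⁻¹ := by
  classical
  haveI : Fact p.Prime := ⟨hp⟩
  have hcent : ∀ x ∈ N, x⁻¹ * α x ∈ T ∧ ∀ t ∈ T, x⁻¹ * α x * t = t * (x⁻¹ * α x) := by
    intro x hx
    have hconj : ∀ t ∈ T, α x * t * (α x)⁻¹ = x * t * x⁻¹ := by
      intro t ht
      have hxt : x * t ∈ N := N.mul_mem hx (hTN ht)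
      have h1 : α (x * t * x⁻¹) = α x * α t * (α x)⁻¹ := by
        rw [F.mul_on hα (x * t) hxt x⁻¹ (N.inv_mem hx), F.mul_on hα x hx t (hTN ht),
          mor_inv hα hx]
      have h2 : x * t * x⁻¹ ∈ T := (Subgroup.mem_normalizer_iff.mp (hNnorm hx) t).mp ht
      rw [hid _ h2, hid _ ht] at h1
      exact h1.symm
    have hcomm : ∀ t ∈ T, x⁻¹ * α x * t = t * (x⁻¹ * α x) := by
      intro t ht
      have h3 : x⁻¹ * (α x * t * (α x)⁻¹) * α x = x⁻¹ * (x * t * x⁻¹) * α x := by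
        rw [hconj t ht]
      calc x⁻¹ * α x * t = x⁻¹ * (α x * t * (α x)⁻¹) * α x := by group
        _ = x⁻¹ * (x * t * x⁻¹) * α x := h3
        _ = t * (x⁻¹ * α x) := by group
    refine ⟨?_, hcomm⟩
    apply hT T (isConj_refl_s15 T)
    rw [SetLike.mem_coe, Subgroup.mem_centralizer_iff]
    intro t ht
    exact (hcomm t ht).symm
  have hαN : ∀ x ∈ N, α x ∈ N := by
    intro x hx
    have hd := (hcent x hx).1
    have h : α x = x * (x⁻¹ * α x) := by group
    rw [h]
    exact N.mul_mem hx (hTN hd)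
  obtain ⟨N', hN'mem, hN'max⟩ := Set.Finite.exists_maximalFor
    (fun N₁ : Subgroup S => Nat.card (Subgroup.normalizer (N₁ : Set S))) {N₁ | F.IsConj N N₁} (Set.toFinite _)
    ⟨N, isConj_refl_s15 N⟩
  have hN'full : F.FullyNormalized N' := by
    intro Q hQ
    have hQmem : Q ∈ {N₁ | F.IsConj N N₁} := isConj_trans_s15 hN'mem hQ
    by_contra hlt
    push_neg at hlt
    exact absurd (hN'max hQmem hlt.le) (not_le.mpr hlt)
  obtain ⟨ω, hω, hωim⟩ := hN'mem
  obtain ⟨ωi, hωi, hωiω⟩ := F.inv_mem N' hω hωim.symm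
  have hωmem : ∀ x ∈ N, ω x ∈ N' := by
    intro x hx
    rw [← SetLike.mem_coe, ← hωim]
    exact ⟨x, hx, rfl⟩
  have hsurj : ∀ y ∈ N', ∃ x ∈ N, ω x = y := by
    intro y hy
    rw [← SetLike.mem_coe, ← hωim] at hy
    obtain ⟨x, hx, rfl⟩ := hy
    exact ⟨x, hx, rfl⟩
  have hωiN : ∀ y ∈ N', ωi y ∈ N := by
    intro y hy
    obtain ⟨x, hx, rfl⟩ := hsurj y hy
    rw [hωiω x hx]
    exact hx
  set T' : Subgroup S := morRange hω T hTN with hT'def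
  have hT'le : T' ≤ N' := by
    rintro _ ⟨t, ht, rfl⟩
    exact hωmem t (hTN ht)
  have hT'conj : F.IsConj T T' := ⟨ω, F.restrict_mem T hTN hω, rfl⟩
  set fβ : S → S := ω ∘ (α ∘ ωi) with hfβdef
  have hfβMor : F.Mor N' fβ :=
    F.comp_mem (F.comp_mem hωi hα hωiN) hω (fun y hy => hαN _ (hωiN y hy))
  have hβω : ∀ x ∈ N, fβ (ω x) = ω (α x) := by
    intro x hx
    show ω (α (ωi (ω x))) = ω (α x)
    rw [hωiω x hx]
  have hβT' : ∀ t ∈ T', fβ t = t := by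
    rintro _ ⟨t, ht, rfl⟩
    rw [hβω t (hTN ht), hid t ht]
  have hβmem : ∀ y ∈ N', fβ y ∈ N' := by
    intro y hy
    obtain ⟨x, hx, rfl⟩ := hsurj y hy
    rw [hβω x hx]
    exact hωmem _ (hαN x hx)
  have hβZ : ∀ y ∈ N', y⁻¹ * fβ y ∈ T' ∧ ∀ t ∈ T', y⁻¹ * fβ y * t = t * (y⁻¹ * fβ y) := by
    intro y hy
    obtain ⟨x, hx, rfl⟩ := hsurj y hy
    obtain ⟨hdT, hdcomm⟩ := hcent x hx
    have hαx : α x = x * (x⁻¹ * α x) := by group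
    have heq : (ω x)⁻¹ * fβ (ω x) = ω (x⁻¹ * α x) := by
      rw [hβω x hx, hαx, F.mul_on hω x hx _ (hTN hdT)]
      group
    rw [heq]
    refine ⟨⟨_, hdT, rfl⟩, ?_⟩
    rintro _ ⟨t, ht, rfl⟩
    rw [← F.mul_on hω _ (hTN hdT) t (hTN ht), ← F.mul_on hω t (hTN ht) _ (hTN hdT),
      hdcomm t ht]
  set eβ : ↥N' → ↥N' := fun x => ⟨fβ x, hβmem x x.2⟩ with heβ
  have heβinj : Function.Injective eβ := by
    intro a b hab
    exact Subtype.ext (F.inj_on hfβMor a.2 b.2 (congrArg Subtype.val hab))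
  set σβ : Equiv.Perm ↥N' := Equiv.ofBijective eβ (Finite.injective_iff_bijective.mp heβinj)
    with hσβdef
  have hσβapp : ∀ x : ↥N', ((σβ x : ↥N') : S) = fβ x := fun x => rfl
  have hσβA : σβ ∈ F.permGroup N' := ⟨fβ, hfβMor, fun x => rfl⟩
  -- the stability property
  set ZT' : Set S := {c | c ∈ T' ∧ ∀ t ∈ T', c * t = t * c} with hZT'
  have hZmul : ∀ c₁ ∈ ZT', ∀ c₂ ∈ ZT', c₁ * c₂ ∈ ZT' := by
    rintro c₁ ⟨h₁T, h₁c⟩ c₂ ⟨h₂T, h₂c⟩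
    refine ⟨T'.mul_mem h₁T h₂T, fun t ht => ?_⟩
    calc c₁ * c₂ * t = c₁ * (c₂ * t) := by group
      _ = c₁ * (t * c₂) := by rw [h₂c t ht]
      _ = c₁ * t * c₂ := by group
      _ = t * c₁ * c₂ := by rw [h₁c t ht]
      _ = t * (c₁ * c₂) := by group
  set Kp : Equiv.Perm ↥N' → Prop :=
    fun σ => (∀ x : ↥N', (x : S) ∈ T' → ((σ x : ↥N') : S) = x) ∧
      ∀ x : ↥N', (x : S)⁻¹ * ((σ x : ↥N') : S) ∈ ZT' with hKpdef
  have hKσβ : Kp σβ := by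
    constructor
    · intro x hx
      rw [hσβapp]
      exact hβT' _ hx
    · intro x
      rw [hσβapp]
      exact hβZ _ x.2
  have hKmul : ∀ σ₁ σ₂ : Equiv.Perm ↥N', σ₁ ∈ F.permGroup N' → Kp σ₁ → Kp σ₂ →
      Kp (σ₁ * σ₂) := by
    intro σ₁ σ₂ hA1 hK1 hK2
    obtain ⟨f₁, hf₁, he₁⟩ := hA1
    have key : ∀ x : ↥N', (((σ₁ * σ₂) x : ↥N') : S) =
        ((σ₁ x : ↥N') : S) * ((x : S)⁻¹ * ((σ₂ x : ↥N') : S)) := by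
      intro x
      have hc2 := hK2.2 x
      have hc₂T' : (x : S)⁻¹ * ((σ₂ x : ↥N') : S) ∈ T' := hc2.1
      have hval : ((σ₂ x : ↥N') : S) = (x : S) * ((x : S)⁻¹ * ((σ₂ x : ↥N') : S)) := by group
      have h0 : (((σ₁ * σ₂) x : ↥N') : S) = f₁ ((σ₂ x : ↥N') : S) := he₁ (σ₂ x)
      rw [h0, hval, F.mul_on hf₁ _ x.2 _ (hT'le hc₂T')]
      congr 1
      · exact (he₁ x).symm
      · have hfix := hK1.1 ⟨_, hT'le hc₂T'⟩ hc₂T'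
        rw [he₁ ⟨_, hT'le hc₂T'⟩] at hfix
        calc f₁ ((x : S)⁻¹ * ((σ₂ x : ↥N') : S)) = (x : S)⁻¹ * ((σ₂ x : ↥N') : S) := hfix
          _ = (x : S)⁻¹ * ((x : S) * ((x : S)⁻¹ * ((σ₂ x : ↥N') : S))) := by group
    constructor
    · intro x hx
      rw [key x, hK1.1 x hx, hK2.1 x hx]
      group
    · intro x
      have h4 : (x : S)⁻¹ * (((σ₁ * σ₂) x : ↥N') : S) =
          ((x : S)⁻¹ * ((σ₁ x : ↥N') : S)) * ((x : S)⁻¹ * ((σ₂ x : ↥N') : S)) := by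
        rw [key x]
        group
      rw [h4]
      exact hZmul _ (hK1.2 x) _ (hK2.2 x)
  have hK1 : Kp 1 := by
    constructor
    · intro x hx
      rfl
    · intro x
      show (x : S)⁻¹ * ((x : ↥N') : S) ∈ ZT'
      rw [inv_mul_cancel]
      exact ⟨T'.one_mem, fun t ht => by group⟩
  have hKpow : ∀ n : ℕ, Kp (σβ ^ n) := by
    intro n
    induction n with
    | zero => simpa using hK1
    | succ n ih =>
      rw [pow_succ]
      exact hKmul _ _ ((F.permGroup N').pow_mem hσβA n) ih hKσβ
  have hkill : ∀ τ : Equiv.Perm ↥N', τ ∈ F.permGroup N' → Kp τ → ∀ m : ℕ, ¬ p ∣ m →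
      τ ^ m = 1 → τ = 1 := by
    intro τ hτA hτK m hpm hm1
    obtain ⟨f, hf, he⟩ := hτA
    ext x
    obtain ⟨hcT', hccomm⟩ := hτK.2 x
    have hval : ((τ x : ↥N') : S) = (x : S) * ((x : S)⁻¹ * ((τ x : ↥N') : S)) := by group
    have hstep : ∀ j : ℕ, (((τ ^ j) x : ↥N') : S) =
        (x : S) * ((x : S)⁻¹ * ((τ x : ↥N') : S)) ^ j := by
      intro j
      induction j with
      | zero => simp
      | succ j ih =>
        have hpow : τ ^ (j + 1) = τ * τ ^ j := by rw [pow_succ']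
        have hcjT' : ((x : S)⁻¹ * ((τ x : ↥N') : S)) ^ j ∈ T' := T'.pow_mem hcT' j
        have happ : (((τ * τ ^ j) x : ↥N') : S) = f (((τ ^ j) x : ↥N') : S) := he ((τ ^ j) x)
        rw [hpow, happ, ih, F.mul_on hf _ x.2 _ (hT'le hcjT')]
        have hfx : f (x : S) = (x : S) * ((x : S)⁻¹ * ((τ x : ↥N') : S)) := by
          rw [← he x]
          exact hval
        have hfc : f (((x : S)⁻¹ * ((τ x : ↥N') : S)) ^ j) =
            ((x : S)⁻¹ * ((τ x : ↥N') : S)) ^ j := by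
          have hfix := hτK.1 ⟨_, hT'le hcjT'⟩ hcjT'
          rw [he ⟨_, hT'le hcjT'⟩] at hfix
          exact hfix
        rw [hfx, hfc, mul_assoc, ← pow_succ']
    have hcm : ((x : S)⁻¹ * ((τ x : ↥N') : S)) ^ m = 1 := by
      have := hstep m
      rw [hm1] at this
      simp only [Equiv.Perm.one_apply] at this
      exact (mul_left_cancel (a := (x : S)) (by rw [← this, mul_one])).symm
    obtain ⟨k, hk⟩ := hS ((x : S)⁻¹ * ((τ x : ↥N') : S))
    have hord1 : orderOf ((x : S)⁻¹ * ((τ x : ↥N') : S)) ∣ m :=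
      orderOf_dvd_of_pow_eq_one hcm
    have hord2 : orderOf ((x : S)⁻¹ * ((τ x : ↥N') : S)) ∣ p ^ k :=
      orderOf_dvd_of_pow_eq_one hk
    have hcop : Nat.Coprime (p ^ k) m := ((Nat.Prime.coprime_iff_not_dvd hp).mpr hpm).pow_left k
    have hc1 : ((x : S)⁻¹ * ((τ x : ↥N') : S)) = 1 := by
      rw [← orderOf_eq_one_iff]
      exact Nat.eq_one_of_dvd_coprimes hcop hord2 hord1
    have hfinal : τ x = x := by
      apply Subtype.ext
      rw [hval, hc1, mul_one]
    simp [hfinal]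
  have hσβord : ∃ a : ℕ, σβ ^ (p ^ a) = 1 := by
    set n := orderOf σβ with hn
    have hn0 : n ≠ 0 := (orderOf_pos σβ).ne'
    set a := n.factorization p with hadef
    have hdvd : p ^ a ∣ n := Nat.ordProj_dvd n p
    refine ⟨a, hkill (σβ ^ (p ^ a)) ((F.permGroup N').pow_mem hσβA _) (hKpow _) (n / p ^ a)
      (Nat.not_dvd_ordCompl hp hn0) ?_⟩
    rw [← pow_mul, Nat.mul_div_cancel' hdvd]
    exact pow_orderOf_eq_one σβ
  -- Sylow theory inside the F-automorphism group of N'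
  set A : Subgroup (Equiv.Perm ↥N') := F.permGroup N' with hA
  set BP : Subgroup (Equiv.Perm ↥N') := (conjHom S N').range with hBPdef
  have hBPA : BP ≤ A := F.conjHom_range_le N'
  set Bsub : Subgroup ↥A := BP.subgroupOf A with hBsubdef
  have hindex : ¬ p ∣ Bsub.index := by
    have hsyl := (hF.1 N' hN'full).2
    have hX := F.card_permGroup N'
    have hY := card_conjHom_range (S := S) N'
    have hLag : Nat.card ↥Bsub * Bsub.index = Nat.card ↥A := Bsub.card_mul_index
    have hBcard : Nat.card ↥BP = Nat.card ↥Bsub :=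
      (Nat.card_congr (Subgroup.subgroupOfEquivOfLe hBPA).toEquiv).symm
    have hpos : 0 < Nat.card ↥Bsub := Nat.card_pos
    have hdiveq : Set.ncard {g : ↥N' → S | ∃ f : S → S, F.Mor N' f ∧
          f '' (N' : Set S) = (N' : Set S) ∧ ∀ x : ↥N', g x = f (x : S)} /
        Set.ncard {g : ↥N' → S | ∃ s ∈ (Subgroup.normalizer (N' : Set S)), ∀ x : ↥N', g x = s * (x : S) * s⁻¹} =
          Bsub.index := by
      rw [hX, hY, hBcard, ← hLag, Nat.mul_div_cancel_left _ hpos]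
    rw [hdiveq] at hsyl
    exact hsyl
  have hBp : IsPGroup p ↥Bsub := by
    intro g
    obtain ⟨s, hs⟩ := (Subgroup.mem_subgroupOf.mp g.2 : ((g : ↥A) : Equiv.Perm ↥N') ∈ BP)
    obtain ⟨k, hk⟩ := hS (s : S)
    refine ⟨k, ?_⟩
    have hs1 : s ^ (p ^ k) = 1 := by
      apply Subtype.ext
      push_cast
      exact hk
    have hperm : ((g : ↥A) : Equiv.Perm ↥N') ^ (p ^ k) = 1 := by
      rw [← hs, ← map_pow, hs1, map_one]
    apply Subtype.ext
    apply Subtype.ext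
    rw [Subgroup.coe_pow, Subgroup.coe_pow]
    exact hperm
  obtain ⟨Q₀, hQ₀le⟩ := hBp.exists_le_sylow
  have hBQ : Bsub = (Q₀ : Subgroup ↥A) := by
    have h1 : Bsub.relIndex ↑Q₀ * (Q₀ : Subgroup ↥A).index = Bsub.index :=
      Subgroup.relIndex_mul_index hQ₀le
    have h2 : ¬ p ∣ Bsub.relIndex ↑Q₀ := by
      intro hd
      exact hindex (h1 ▸ hd.mul_right _)
    have h3 : Bsub.relIndex ↑Q₀ ∣ Nat.card ↥(Q₀ : Subgroup ↥A) := Subgroup.index_dvd_card _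
    obtain ⟨e, he⟩ := Q₀.isPGroup'.exists_card_eq
    rw [he] at h3
    obtain ⟨j, hj, hjeq⟩ := (Nat.dvd_prime_pow hp).mp h3
    have hj0 : j = 0 := by
      by_contra hj0
      exact h2 (hjeq ▸ dvd_pow_self p hj0)
    rw [hj0, pow_zero] at hjeq
    exact le_antisymm hQ₀le (Subgroup.relIndex_eq_one.mp hjeq)
  set σβA : ↥A := ⟨σβ, hσβA⟩ with hσβA'
  obtain ⟨a, ha⟩ := hσβord
  have hA1 : σβA ^ (p ^ a) = 1 := by
    apply Subtype.ext
    rw [Subgroup.coe_pow]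
    exact ha
  have hzp : IsPGroup p ↥(Subgroup.zpowers σβA) := by
    intro q
    refine ⟨a, ?_⟩
    obtain ⟨i, hi⟩ := q.2
    apply Subtype.ext
    rw [Subgroup.coe_pow, ← hi, ← zpow_natCast (σβA ^ i), ← zpow_mul, mul_comm, zpow_mul,
      zpow_natCast, hA1, one_zpow]
    simp
  obtain ⟨R, hRle⟩ := hzp.exists_le_sylow
  obtain ⟨g, hg⟩ := MulAction.exists_smul_eq (↥A) R Q₀
  have hmemR : σβA ∈ R := hRle (Subgroup.mem_zpowers σβA)
  have hconjmem : g * σβA * g⁻¹ ∈ Bsub := by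
    rw [hBQ]
    have h1 : MulAut.conj g • σβA ∈ MulAut.conj g • (R : Subgroup ↥A) :=
      Subgroup.smul_mem_pointwise_smul _ _ _ hmemR
    rw [← Sylow.coe_subgroup_smul, hg] at h1
    simpa [MulAut.smul_def, MulAut.conj_apply] using h1
  -- unfold the conjugacy relation
  obtain ⟨s, hs⟩ := (Subgroup.mem_subgroupOf.mp hconjmem :
    ((((g * σβA * g⁻¹ : ↥A)) : Equiv.Perm ↥N')) ∈ BP)
  obtain ⟨f₁, hf₁, he₁⟩ := (g : ↥A).2
  set gσ : Equiv.Perm ↥N' := ((g : ↥A) : Equiv.Perm ↥N') with hgσ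
  have hscoe : conjHom S N' s = gσ * σβ * gσ⁻¹ := by
    rw [hs]
    push_cast
    rfl
  have hkey : ∀ v : ↥N', conjHom S N' s (gσ v) = gσ (σβ v) := by
    intro v
    have : (conjHom S N' s) (gσ v) = (gσ * σβ * gσ⁻¹) (gσ v) := by rw [hscoe]
    rw [this]
    simp [Equiv.Perm.mul_apply]
  have hkeyS : ∀ v : ↥N', (s : S) * f₁ (v : S) * (s : S)⁻¹ = f₁ ((σβ v : ↥N') : S) := by
    intro v
    have h5 := congrArg (Subtype.val) (hkey v)
    rw [conjHom_apply] at h5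
    rw [← he₁ v, ← he₁ (σβ v)]
    exact h5
  -- s centralizes the image of T' under f₁
  set T'' : Subgroup S := morRange hf₁ T' hT'le with hT''def
  have hsT'' : (s : S) ∈ T'' := by
    have hcentral : (s : S) ∈ Subgroup.centralizer (T'' : Set S) := by
      rw [Subgroup.mem_centralizer_iff]
      rintro _ ⟨t', ht', rfl⟩
      have hv : (⟨t', hT'le ht'⟩ : ↥N') ∈ Set.univ := trivial
      have hfix : σβ ⟨t', hT'le ht'⟩ = ⟨t', hT'le ht'⟩ := by
        apply Subtype.ext
        rw [hσβapp]
        exact hβT' t' ht'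
      have h6 := hkeyS ⟨t', hT'le ht'⟩
      rw [hfix] at h6
      -- h6 : s * f₁ t' * s⁻¹ = f₁ t'
      calc f₁ t' * (s : S) = ((s : S) * f₁ t' * (s : S)⁻¹) * (s : S) := by rw [h6]
        _ = (s : S) * f₁ t' := by group
    have hT''conj : F.IsConj T T'' :=
      isConj_trans_s15 hT'conj ⟨f₁, F.restrict_mem T' hT'le hf₁, rfl⟩
    exact hT T'' hT''conj hcentral
  obtain ⟨z', hz'T', hz'⟩ := hsT''
  -- conclude fβ is conjugation by z' on N'
  have hβconj : ∀ y ∈ N', fβ y = z' * y * z'⁻¹ := by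
    intro y hy
    have h7 := hkeyS ⟨y, hy⟩
    rw [← hz'] at h7
    have h8 : f₁ (z' * y * z'⁻¹) = f₁ z' * f₁ y * (f₁ z')⁻¹ := by
      rw [F.mul_on hf₁ (z' * y) (N'.mul_mem (hT'le hz'T') hy) z'⁻¹ (N'.inv_mem (hT'le hz'T')),
        F.mul_on hf₁ z' (hT'le hz'T') y hy, mor_inv hf₁ (hT'le hz'T')]
    rw [← h8] at h7
    have h9 : (((σβ ⟨y, hy⟩ : ↥N') : S)) = fβ y := hσβapp _
    rw [h9] at h7
    exact (F.inj_on hf₁ (hβmem y hy) (N'.mul_mem (N'.mul_mem (hT'le hz'T') hy)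
      (N'.inv_mem (hT'le hz'T'))) h7.symm)
  have hz'comm : ∀ t' ∈ T', z' * t' = t' * z' := by
    intro t' ht'
    have h10 : t' = z' * t' * z'⁻¹ := by
      rw [← hβconj t' (hT'le ht')]
      exact (hβT' t' ht').symm
    calc z' * t' = (z' * t' * z'⁻¹) * z' := by group
      _ = t' * z' := by rw [← h10]
  -- pull back through ω
  obtain ⟨z, hzT, hωz⟩ := hz'T'
  refine ⟨z, hzT, ?_, ?_⟩
  · intro t ht
    have h11 : ω (z * t) = ω (t * z) := by
      rw [F.mul_on hω z (hTN hzT) t (hTN ht), F.mul_on hω t (hTN ht) z (hTN hzT), hωz]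
      have := hz'comm (ω t) ⟨t, ht, rfl⟩
      rw [this]
    exact F.inj_on hω (N.mul_mem (hTN hzT) (hTN ht)) (N.mul_mem (hTN ht) (hTN hzT)) h11
  · intro x hx
    have h12 : ω (α x) = ω (z * x * z⁻¹) := by
      rw [← hβω x hx, hβconj (ω x) (hωmem x hx), ← hωz,
        ← F.mul_on hω z (hTN hzT) x hx, ← mor_inv hω (hTN hzT),
        ← F.mul_on hω (z * x) (N.mul_mem (hTN hzT) hx) z⁻¹ (N.inv_mem (hTN hzT))]
    exact F.inj_on hω (hαN x hx) (N.mul_mem (N.mul_mem (hTN hzT) hx) (N.inv_mem (hTN hzT))) h12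


lemma subgroup_card_lt [Fintype S] {H K : Subgroup S} (h : H < K) :
    Nat.card ↥H < Nat.card ↥K := by
  have h1 : Nat.card ↥H = (H : Set S).ncard := Nat.card_coe_set_eq _
  have h2 : Nat.card ↥K = (K : Set S).ncard := Nat.card_coe_set_eq _
  rw [h1, h2]
  exact Set.ncard_lt_ncard (SetLike.coe_ssubset_coe.mpr h) (Set.toFinite _)

lemma lemA {p : ℕ} (hp : p.Prime) [Fintype S] (hS : IsPGroup p S)
    (hF : F.Saturated p) (Q' : Subgroup S) :
    ∀ n : ℕ, ∀ (T : Subgroup S) (α : S → S), T ≤ Q' → F.Centric T → F.Mor Q' α →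
      (∀ t ∈ T, α t = t) → Nat.card ↥Q' - Nat.card ↥T ≤ n →
      ∃ z ∈ T, (∀ t ∈ T, z * t = t * z) ∧ ∀ x ∈ Q', α x = z * x * z⁻¹ := by
  intro n
  induction n with
  | zero =>
    intro T α hTQ hT hα hid hcard
    have hTQeq : T = Q' := by
      by_contra hne
      have := subgroup_card_lt (lt_of_le_of_ne hTQ hne)
      omega
    refine ⟨1, T.one_mem, fun t ht => by group, fun x hx => ?_⟩
    rw [hid x (hTQeq ▸ hx)]
    group
  | succ n ih =>
    intro T α hTQ hT hα hid hcard
    by_cases hts : T = Q'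
    · refine ⟨1, T.one_mem, fun t ht => by group, fun x hx => ?_⟩
      rw [hid x (hts ▸ hx)]
      group
    · have hlt : T < Q' := lt_of_le_of_ne hTQ hts
      have hgrow : T < (Subgroup.normalizer (T : Set S)) ⊓ Q' := lt_normalizer_inf hp hS hlt
      have hNle : (Subgroup.normalizer (T : Set S)) ⊓ Q' ≤ Q' := inf_le_right
      have hTN : T ≤ (Subgroup.normalizer (T : Set S)) ⊓ Q' := le_inf Subgroup.le_normalizer hTQ
      obtain ⟨z₁, hz₁T, hz₁comm, hz₁⟩ := crux hp hS hF hTN inf_le_left hT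
        (F.restrict_mem _ hNle hα) hid
      set α₂ : S → S := (fun y => z₁⁻¹ * y * z₁⁻¹⁻¹) ∘ α with hα₂def
      have hα₂ : F.Mor Q' α₂ := F.comp_mem hα (F.conj_mem ⊤ z₁⁻¹) (fun x _ => trivial)
      have hid₂ : ∀ t ∈ (Subgroup.normalizer (T : Set S)) ⊓ Q', α₂ t = t := by
        intro t ht
        show z₁⁻¹ * α t * z₁⁻¹⁻¹ = t
        rw [hz₁ t ht]
        group
      have hNcentric : F.Centric ((Subgroup.normalizer (T : Set S)) ⊓ Q') := centric_of_le hT hTN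
      have hcard2 : Nat.card ↥Q' - Nat.card ↥((Subgroup.normalizer (T : Set S)) ⊓ Q') ≤ n := by
        have h1 := subgroup_card_lt hgrow
        omega
      obtain ⟨z₂, hz₂N, hz₂comm, hz₂⟩ := ih _ α₂ hNle hNcentric hα₂ hid₂ hcard2
      have hz₂T : z₂ ∈ T := by
        apply hT T (isConj_refl_s15 T)
        rw [SetLike.mem_coe, Subgroup.mem_centralizer_iff]
        intro t ht
        exact (hz₂comm t (hTN ht)).symm
      refine ⟨z₁ * z₂, T.mul_mem hz₁T hz₂T, ?_, ?_⟩
      · intro t ht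
        rw [mul_assoc, hz₂comm t (hTN ht), ← mul_assoc, hz₁comm t ht, mul_assoc]
      · intro x hx
        have h2 : z₁⁻¹ * α x * z₁⁻¹⁻¹ = z₂ * x * z₂⁻¹ := hz₂ x hx
        calc α x = z₁ * (z₁⁻¹ * α x * z₁⁻¹⁻¹) * z₁⁻¹ := by group
          _ = z₁ * (z₂ * x * z₂⁻¹) * z₁⁻¹ := by rw [h2]
          _ = z₁ * z₂ * x * (z₁ * z₂)⁻¹ := by group

end FusionSystem

/-- Puig.  If `F` is a saturated fusion system on a finite `p`-group `S`,
`P ≤ Q ≤ S` with `P` `F`-centric, and `ψ₁, ψ₂ : Q → S` are `F`-morphisms agreeing on `P`,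
then `ψ₂ = ψ₁ ∘ c_z` on `Q` for some `z ∈ Z(P)`. -/
theorem stmt15 (p : ℕ) (hp : p.Prime) (S : Type) [Group S] [Fintype S]
    (hS : IsPGroup p S) (F : FusionSystem S) (hF : F.Saturated p)
    (P Q : Subgroup S) (hPQ : P ≤ Q) (hP : F.Centric P)
    (ψ₁ ψ₂ : S → S) (h1 : F.Mor Q ψ₁) (h2 : F.Mor Q ψ₂)
    (hagree : ∀ x ∈ P, ψ₁ x = ψ₂ x) :
    ∃ z ∈ P, (∀ x ∈ P, z * x = x * z) ∧ ∀ x ∈ Q, ψ₂ x = ψ₁ (z * x * z⁻¹) := by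
  classical
  obtain ⟨χ, hχ, hχψ⟩ := F.inv_mem (FusionSystem.morRange h1 Q le_rfl) h1 rfl
  have hχQ : ∀ y ∈ FusionSystem.morRange h1 Q le_rfl, χ y ∈ Q := by
    rintro _ ⟨x, hx, rfl⟩
    rw [hχψ x hx]
    exact hx
  have hfαMor : F.Mor (FusionSystem.morRange h1 Q le_rfl) (ψ₂ ∘ χ) := F.comp_mem hχ h2 hχQ
  have hTle : FusionSystem.morRange h1 P hPQ ≤ FusionSystem.morRange h1 Q le_rfl := by
    rintro _ ⟨q, hq, rfl⟩
    exact ⟨q, hPQ hq, rfl⟩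
  have hTconj : F.IsConj P (FusionSystem.morRange h1 P hPQ) :=
    ⟨ψ₁, F.restrict_mem P hPQ h1, rfl⟩
  have hTcentric : F.Centric (FusionSystem.morRange h1 P hPQ) :=
    FusionSystem.centric_of_isConj hP hTconj
  have hid : ∀ t ∈ FusionSystem.morRange h1 P hPQ, (ψ₂ ∘ χ) t = t := by
    rintro _ ⟨q, hq, rfl⟩
    show ψ₂ (χ (ψ₁ q)) = ψ₁ q
    rw [hχψ q (hPQ hq)]
    exact (hagree q hq).symm
  obtain ⟨z', hz'T, hz'comm, hz'⟩ := FusionSystem.lemA hp hS hF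
    (FusionSystem.morRange h1 Q le_rfl) (Nat.card ↥(FusionSystem.morRange h1 Q le_rfl))
    (FusionSystem.morRange h1 P hPQ) (ψ₂ ∘ χ) hTle hTcentric hfαMor hid (Nat.sub_le _ _)
  obtain ⟨w, hwP, hwz⟩ := hz'T
  refine ⟨w, hwP, ?_, ?_⟩
  · intro q hq
    have h1' : ψ₁ (w * q) = ψ₁ (q * w) := by
      rw [F.mul_on h1 w (hPQ hwP) q (hPQ hq), F.mul_on h1 q (hPQ hq) w (hPQ hwP), hwz]
      exact hz'comm (ψ₁ q) ⟨q, hq, rfl⟩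
    exact F.inj_on h1 (Q.mul_mem (hPQ hwP) (hPQ hq)) (Q.mul_mem (hPQ hq) (hPQ hwP)) h1'
  · intro x hx
    have hx₁ : ψ₁ x ∈ FusionSystem.morRange h1 Q le_rfl := ⟨x, hx, rfl⟩
    have hz'' := hz' (ψ₁ x) hx₁
    have hL : (ψ₂ ∘ χ) (ψ₁ x) = ψ₂ x := by
      show ψ₂ (χ (ψ₁ x)) = ψ₂ x
      rw [hχψ x hx]
    rw [hL] at hz''
    rw [hz'', ← hwz, ← FusionSystem.mor_inv h1 (hPQ hwP), ← F.mul_on h1 w (hPQ hwP) x hx,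
      ← F.mul_on h1 (w * x) (Q.mul_mem (hPQ hwP) hx) w⁻¹ (Q.inv_mem (hPQ hwP))]
end

section
/- Let S be a finite group, Ω an (S,S)-biset, P ≤ S a subgroup, and K ≤ Aut(P) a subgroup of automorphisms of P. Define the K-normalizer N_S^K(P) = {n ∈ N_S(P) | c_n|_P ∈ K} and N_Ω^K(P) = {ω ∈ Ω | Stab_{S×S}(ω) = (Q,ψ) with P ≤ Q, ψ(P) = P, ψ|_P ∈ K} (for a bifree Ω where all stabilizers are twisted diagonals). Then N_Ω^K(P) is closed under left and right multiplication by elements of N_S^K(P), so it is an (N_S^K(P), N_S^K(P))-biset. -/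
/-- Let `Ω` be a bifree `(S,S)`-biset (so point-stabilizers are twisted
diagonals), `P ≤ S` and `K ≤ Aut(P)`.  With `N_S^K(P) = {n ∈ N_S(P) | c_n|_P ∈ K}` and
`N_Ω^K(P) = {ω | Stab(ω) = (Q,ψ), P ≤ Q, ψP = P, ψ|_P ∈ K}`, the set `N_Ω^K(P)` is closed
under left and right multiplication by elements of `N_S^K(P)`. -/
theorem stmt18 (S Ω : Type) [Group S] [Fintype S] [Fintype Ω]
    (l r : S → Ω → Ω)
    (l_one : ∀ ω, l 1 ω = ω) (l_mul : ∀ a b ω, l (a * b) ω = l a (l b ω))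
    (r_one : ∀ ω, r 1 ω = ω) (r_mul : ∀ a b ω, r (a * b) ω = r b (r a ω))
    (hcomm : ∀ a b ω, l a (r b ω) = r b (l a ω))
    (l_free : ∀ a ω, l a ω = ω → a = 1)
    (r_free : ∀ a ω, r a ω = ω → a = 1)
    (P : Subgroup S) (K : Subgroup (MulAut ↥P)) :
    ∀ n ∈ {x : S | x ∈ Subgroup.normalizer (P : Set S) ∧ ∃ κ ∈ K, ∀ a : ↥P, x * (a : S) * x⁻¹ = ((κ a : ↥P) : S)},
    ∀ m ∈ {x : S | x ∈ Subgroup.normalizer (P : Set S) ∧ ∃ κ ∈ K, ∀ a : ↥P, x * (a : S) * x⁻¹ = ((κ a : ↥P) : S)},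
    ∀ ω ∈ {ω : Ω | ∃ (Q : Subgroup S) (ψ : S → S),
        (∀ b a : S, l b ω = r a ω ↔ a ∈ Q ∧ b = ψ a) ∧
        P ≤ Q ∧ ψ '' (P : Set S) = (P : Set S) ∧
        ∃ κ ∈ K, ∀ a : ↥P, ψ (a : S) = ((κ a : ↥P) : S)},
      l n (r m ω) ∈ {ω : Ω | ∃ (Q : Subgroup S) (ψ : S → S),
        (∀ b a : S, l b ω = r a ω ↔ a ∈ Q ∧ b = ψ a) ∧
        P ≤ Q ∧ ψ '' (P : Set S) = (P : Set S) ∧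
        ∃ κ ∈ K, ∀ a : ↥P, ψ (a : S) = ((κ a : ↥P) : S)} := by
  rintro n ⟨hn, κn, hκn, hn2⟩ m ⟨hm, κm, hκm, hm2⟩ ω ⟨Q, ψ, hstab, hPQ, hψP, κ, hκ, hψκ⟩
  -- basic cancellation facts
  have linv : ∀ (a : S) (x : Ω), l a⁻¹ (l a x) = x := by
    intro a x; rw [← l_mul, inv_mul_cancel, l_one]
  have rinv : ∀ (a : S) (x : Ω), r a⁻¹ (r a x) = x := by
    intro a x; rw [← r_mul, mul_inv_cancel, r_one]
  have rinv' : ∀ (a : S) (x : Ω), r a (r a⁻¹ x) = x := by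
    intro a x; have := rinv a⁻¹ x; rwa [inv_inv] at this
  have linv' : ∀ (a : S) (x : Ω), l a (l a⁻¹ x) = x := by
    intro a x; have := linv a⁻¹ x; rwa [inv_inv] at this
  set κ' : MulAut ↥P := κn * κ * κm with hκ'def
  have hκ'mem : κ' ∈ K := mul_mem (mul_mem hκn hκ) hκm
  set ψ' : S → S := fun a => n * ψ (m * a * m⁻¹) * n⁻¹ with hψ'def
  have hψ'κ : ∀ a : ↥P, ψ' (a : S) = ((κ' a : ↥P) : S) := by
    intro a
    show n * ψ (m * (a : S) * m⁻¹) * n⁻¹ = _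
    rw [hm2 a, hψκ (κm a), hn2 (κ (κm a))]
    rfl
  refine ⟨Q.comap (MulAut.conj m).toMonoidHom, ψ', ?_, ?_, ?_, κ', hκ'mem, hψ'κ⟩
  · -- stabilizer condition
    intro b a
    have eq1 : l n⁻¹ (r m⁻¹ (l b (l n (r m ω)))) = l (n⁻¹ * b * n) ω := by
      rw [← l_mul b n, hcomm (b * n) m ω, rinv m, ← l_mul n⁻¹ (b * n), ← mul_assoc]
    have eq2 : l n⁻¹ (r m⁻¹ (r a (l n (r m ω)))) = r (m * a * m⁻¹) ω := by
      rw [hcomm n m ω, ← r_mul m a, ← r_mul (m * a) m⁻¹, hcomm n⁻¹, linv n]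
    have inj : ∀ x y : Ω, l n⁻¹ (r m⁻¹ x) = l n⁻¹ (r m⁻¹ y) → x = y := by
      intro x y h
      have := congrArg (fun z => r m (l n z)) h
      simpa only [hcomm, linv', rinv'] using this
    have key : l b (l n (r m ω)) = r a (l n (r m ω)) ↔
        l (n⁻¹ * b * n) ω = r (m * a * m⁻¹) ω := by
      constructor
      · intro h; rw [← eq1, ← eq2, h]
      · intro h; exact inj _ _ (by rw [eq1, eq2, h])
    rw [key, hstab]
    constructor
    · rintro ⟨h1, h2⟩
      refine ⟨h1, ?_⟩
      show b = n * ψ (m * a * m⁻¹) * n⁻¹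
      rw [← h2]; group
    · rintro ⟨h1, h2⟩
      refine ⟨h1, ?_⟩
      have : b = n * ψ (m * a * m⁻¹) * n⁻¹ := h2
      rw [this]; group
  · -- P ≤ Q'
    intro p hp
    have : m * p * m⁻¹ ∈ P := by rw [hm2 ⟨p, hp⟩]; exact (κm ⟨p, hp⟩).2
    exact hPQ this
  · -- ψ' '' P = P
    ext x
    constructor
    · rintro ⟨p, hp, rfl⟩
      rw [hψ'κ ⟨p, hp⟩]
      exact (κ' ⟨p, hp⟩).2
    · intro hx
      refine ⟨((κ'⁻¹ ⟨x, hx⟩ : ↥P) : S), (κ'⁻¹ ⟨x, hx⟩).2, ?_⟩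
      rw [hψ'κ (κ'⁻¹ ⟨x, hx⟩)]
      simp
end
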